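/- For every natural number n and every real x with |x| ≥ 1, the n-th Chebyshev polynomial of the first kind satisfies |T_n(x)| ≥ (1/2)·exp(2n·√((|x|−1)/(|x|+1))). -/

import Mathlib

open Polynomial Real

lemma T_real_cosh (t : ℝ) (n : ℤ) :
    (Polynomial.Chebyshev.T ℝ n).eval (Real.cosh t) = Real.cosh (n * t) := by
  have h := Polynomial.Chebyshev.T_complex_cos (t * Complex.I) n
  rw [Complex.cos_mul_I] at h
  have h2 : (n : ℂ) * (t * Complex.I) = ((n : ℝ) * t : ℝ) * Complex.I := by push_cast; ring
  rw [h2, Complex.cos_mul_I] at h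
  exact_mod_cast h

lemma T_eval_neg (n : ℕ) (x : ℝ) :
    (Polynomial.Chebyshev.T ℝ n).eval (-x) = (-1) ^ n * (Polynomial.Chebyshev.T ℝ n).eval x := by
  induction n using Nat.twoStepInduction generalizing x with
  | zero => simp [Polynomial.Chebyshev.T_zero]
  | one => simp [Polynomial.Chebyshev.T_one]
  | more m ih2 ih1 =>
    have : ((m + 2 : ℕ) : ℤ) = (m : ℤ) + 2 := by push_cast; ring
    rw [this, Polynomial.Chebyshev.T_add_two]
    have e1 : ((m + 1 : ℕ) : ℤ) = (m : ℤ) + 1 := by push_cast; ring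
    simp only [Polynomial.eval_sub, Polynomial.eval_mul, Polynomial.eval_ofNat,
      Polynomial.eval_X, ← e1, ih1, ih2]
    ring

lemma exp_two_mul_ineq (u : ℝ) (hu : 0 ≤ u) : Real.exp (2 * u) * (1 - u) ≤ 1 + u := by
  set g : ℝ → ℝ := fun v => (1 + v) - Real.exp (2 * v) * (1 - v) with hg
  have hderiv : ∀ v : ℝ, HasDerivAt g (1 - Real.exp (2 * v) * (1 - 2 * v)) v := by
    intro v
    have h1 : HasDerivAt (fun v : ℝ => 1 + v) 1 v := (hasDerivAt_id v).const_add 1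
    have h2 : HasDerivAt (fun v : ℝ => Real.exp (2 * v)) (Real.exp (2 * v) * 2) v := by
      simpa using ((hasDerivAt_id v).const_mul 2).exp
    have h3 : HasDerivAt (fun v : ℝ => 1 - v) (-1) v := by
      exact (hasDerivAt_id' v).const_sub 1
    have := h1.sub (h2.mul h3)
    exact this.congr_deriv (by ring)
  have hmono : Monotone g := by
    apply monotone_of_deriv_nonneg
    · exact fun v => (hderiv v).differentiableAt
    · intro v
      rw [(hderiv v).deriv]
      have h := Real.add_one_le_exp (-(2 * v))
      have hp : 0 < Real.exp (2 * v) := Real.exp_pos _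
      have : Real.exp (2 * v) * (1 - 2 * v) ≤ Real.exp (2 * v) * Real.exp (-(2 * v)) := by
        apply mul_le_mul_of_nonneg_left _ hp.le
        linarith
      rw [← Real.exp_add] at this
      simp at this
      linarith
  have h0 : g 0 = 0 := by simp [hg]
  have := hmono hu
  rw [h0] at this
  simp only [hg] at this
  linarith

theorem chebyshev_lower_bound (n : ℕ) (x : ℝ) (hx : 1 ≤ |x|) :
    (1 / 2) * Real.exp (2 * n * Real.sqrt ((|x| - 1) / (|x| + 1))) ≤
      |(Polynomial.Chebyshev.T ℝ n).eval x| := by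
  set y := |x| with hy'
  have hy : 1 ≤ y := hx
  have hy0 : (0 : ℝ) < y + 1 := by linarith
  set u := Real.sqrt ((y - 1) / (y + 1)) with hu'
  have hu0 : 0 ≤ u := Real.sqrt_nonneg _
  have hu2 : u ^ 2 = (y - 1) / (y + 1) := Real.sq_sqrt (div_nonneg (by linarith) (by linarith))
  have hu2' : u ^ 2 * (y + 1) = y - 1 := by
    rw [hu2]; field_simp
  have hu1 : u < 1 := by
    by_contra h
    push_neg at h
    have h2 : 1 ≤ u ^ 2 := by nlinarith
    nlinarith
  set r := Real.sqrt (y ^ 2 - 1) with hr'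
  have hr0 : 0 ≤ r := Real.sqrt_nonneg _
  have hr2 : r ^ 2 = y ^ 2 - 1 := Real.sq_sqrt (by nlinarith)
  have hru : r = u * (y + 1) := by
    have h1 : (u * (y + 1)) ^ 2 = r ^ 2 := by rw [hr2]; nlinarith
    nlinarith [mul_nonneg hu0 hy0.le]
  set t := Real.log (y + r) with ht'
  have hyrpos : (0 : ℝ) < y + r := by linarith
  have hexp_t : Real.exp t = y + r := Real.exp_log hyrpos
  have hprod : (y + r) * (y - r) = 1 := by nlinarith
  have hexp_neg : Real.exp (-t) = y - r := by
    rw [Real.exp_neg, hexp_t]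
    field_simp
    linarith [hprod]
  have hcosh : Real.cosh t = y := by rw [Real.cosh_eq, hexp_t, hexp_neg]; ring
  -- key inequality 2u ≤ t
  have hkey : 2 * u ≤ t := by
    rw [ht', Real.le_log_iff_exp_le hyrpos]
    have h1 : Real.exp (2 * u) * (1 - u) ≤ 1 + u := exp_two_mul_ineq u hu0
    have h2 : 1 + u = (y + r) * (1 - u) := by
      rw [hru]; nlinarith
    rw [h2] at h1
    have : 0 < 1 - u := by linarith
    exact le_of_mul_le_mul_right h1 this
  have ht0 : 0 ≤ t := by linarith [mul_nonneg (by norm_num : (0:ℝ) ≤ 2) hu0]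
  have heval : (Polynomial.Chebyshev.T ℝ n).eval y = Real.cosh (n * t) := by
    rw [← hcosh, T_real_cosh t (n : ℤ)]
    norm_num
  have habs : |(Polynomial.Chebyshev.T ℝ n).eval x| = Real.cosh (n * t) := by
    rw [hy'] at heval
    rcases abs_cases x with ⟨h1, _⟩ | ⟨h1, _⟩
    · rw [h1] at heval
      rw [heval, abs_of_pos (Real.cosh_pos _)]
    · have hx' : x = -|x| := by linarith
      rw [hx', T_eval_neg, heval, abs_mul, abs_pow, abs_neg, abs_one, one_pow, one_mul,
        abs_of_pos (Real.cosh_pos _)]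
  rw [habs]
  have hn0 : (0 : ℝ) ≤ n := Nat.cast_nonneg n
  have h1 : 2 * (n : ℝ) * u ≤ (n : ℝ) * t := by
    have := mul_le_mul_of_nonneg_left hkey hn0
    nlinarith
  calc (1 / 2) * Real.exp (2 * n * u) ≤ (1 / 2) * Real.exp (n * t) := by
        have := Real.exp_le_exp.mpr h1
        linarith
    _ ≤ Real.cosh (n * t) := by
        rw [Real.cosh_eq]
        have := (Real.exp_pos (-((n:ℝ) * t))).le
        linarith
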